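/- The local-magic state obtained by applying a T gate to one qubit of the Bell state, v = (1/√2)(|00⟩ + e^{iπ/4}|11⟩) ∈ ℂ² ⊗ ℂ², is maximally entangled yet has stabilizer 2-Rényi entropy M₂(v vᴴ) = log₂(4/3). -/

import Mathlib

noncomputable section
open Matrix Kronecker

/-- The four single-qubit Pauli matrices I, X, Y, Z. -/
def pauli : Fin 4 → Matrix (Fin 2) (Fin 2) ℂ :=
  ![1, !![0, 1; 1, 0], !![0, -Complex.I; Complex.I, 0], !![1, 0; 0, -1]]

/-- Two-qubit Pauli strings σ₁ ⊗ σ₂. -/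
def pauli2 (a : Fin 4 × Fin 4) : Matrix (Fin 2 × Fin 2) (Fin 2 × Fin 2) ℂ :=
  pauli a.1 ⊗ₖ pauli a.2

/-- Rank-one density matrix v vᴴ. -/
def dm {ι : Type*} (v : ι → ℂ) : Matrix ι ι ℂ := Matrix.vecMulVec v (star v)

/-- Stabilizer 2-Rényi entropy of a two-qubit state. -/
def M2two (ψ : Matrix (Fin 2 × Fin 2) (Fin 2 × Fin 2) ℂ) : ℝ :=
  - Real.logb 2 ((1 / 4) * ∑ a : Fin 4 × Fin 4, ‖(pauli2 a * ψ).trace‖ ^ 4)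

/-- Partial trace over the second qubit. -/
def ptraceB (M : Matrix (Fin 2 × Fin 2) (Fin 2 × Fin 2) ℂ) : Matrix (Fin 2) (Fin 2) ℂ :=
  Matrix.of fun i i' => ∑ j : Fin 2, M (i, j) (i', j)

/-- The local-magic state (1/√2)(|00⟩ + e^{iπ/4}|11⟩). -/
def lmState : Fin 2 × Fin 2 → ℂ := fun p =>
  if p = ((0 : Fin 2), (0 : Fin 2)) then (1 / Real.sqrt 2 : ℝ)
  else if p = ((1 : Fin 2), (1 : Fin 2)) then
    (1 / Real.sqrt 2 : ℝ) * Complex.exp (Complex.I * (Real.pi / 4 : ℝ))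
  else 0

lemma lm_exp_eq : Complex.exp (Complex.I * ((Real.pi : ℂ) / 4)) =
    ((Real.sqrt 2 / 2 : ℝ) : ℂ) + ((Real.sqrt 2 / 2 : ℝ) : ℂ) * Complex.I := by
  rw [show Complex.I * ((Real.pi : ℂ) / 4) = ((Real.pi / 4 : ℝ) : ℂ) * Complex.I by
    push_cast; ring, Complex.exp_mul_I, ← Complex.ofReal_cos, ← Complex.ofReal_sin,
    Real.cos_pi_div_four, Real.sin_pi_div_four]

lemma lm_exp_re : (Complex.exp (Complex.I * ((Real.pi : ℂ) / 4))).re = Real.sqrt 2 / 2 := by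
  rw [lm_exp_eq]; simp

lemma lm_exp_im : (Complex.exp (Complex.I * ((Real.pi : ℂ) / 4))).im = Real.sqrt 2 / 2 := by
  rw [lm_exp_eq]; simp

lemma sqrt2_sq : (Real.sqrt 2) ^ 2 = 2 := Real.sq_sqrt (by norm_num)

lemma lm_part1 : ptraceB (dm lmState) = ((1 / 2 : ℂ)) • (1 : Matrix (Fin 2) (Fin 2) ℂ) := by
  ext i i'
  fin_cases i <;> fin_cases i' <;>
    simp [ptraceB, dm, lmState, Matrix.vecMulVec_apply, Fin.sum_univ_two,
      Complex.ext_iff, lm_exp_re, lm_exp_im] <;>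
    nlinarith [sqrt2_sq, Real.sqrt_nonneg 2]

set_option maxHeartbeats 2000000 in
lemma lm_key : ∑ a : Fin 4 × Fin 4, ‖(pauli2 a * dm lmState).trace‖ ^ 4 = 3 := by
  have habs : ∀ z : ℂ, ‖z‖ ^ 4 = (z.re ^ 2 + z.im ^ 2) ^ 2 := fun z => by
    rw [show (4 : ℕ) = 2 * 2 from rfl, pow_mul, Complex.sq_norm, Complex.normSq_apply]; ring
  rw [Fintype.sum_prod_type]
  simp only [Fin.sum_univ_four, habs]
  simp [pauli2, pauli, Matrix.trace, Matrix.mul_apply, Matrix.diag,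
    Fintype.sum_prod_type, Fin.sum_univ_two, dm, Matrix.vecMulVec_apply, lmState,
    kroneckerMap_apply, lm_exp_re, lm_exp_im]
  ring_nf
  have h8 : Real.sqrt 2 ^ 8 = 16 := by
    rw [show (8 : ℕ) = 2 * 4 from rfl, pow_mul, sqrt2_sq]; norm_num
  have h12 : Real.sqrt 2 ^ 12 = 64 := by
    rw [show (12 : ℕ) = 2 * 6 from rfl, pow_mul, sqrt2_sq]; norm_num
  have h16 : Real.sqrt 2 ^ 16 = 256 := by
    rw [show (16 : ℕ) = 2 * 8 from rfl, pow_mul, sqrt2_sq]; norm_num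
  rw [h8, h12, h16]; norm_num

theorem local_magic_state_maximally_entangled_with_magic :
    ptraceB (dm lmState) = ((1 / 2 : ℂ)) • (1 : Matrix (Fin 2) (Fin 2) ℂ) ∧
      M2two (dm lmState) = Real.logb 2 (4 / 3) := by
  refine ⟨lm_part1, ?_⟩
  rw [M2two, lm_key, show (1 / 4 : ℝ) * 3 = (4 / 3 : ℝ)⁻¹ by norm_num, Real.logb_inv, neg_neg]
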